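/- Let k be a field with char k ≠ 2 and l ≥ 2. For every matrix g ∈ GL(2l,k) satisfying ᵀg·β·g = β (i.e., g lies in the split orthogonal group O(2l,k)), there exist λ ∈ kˣ and a matrix E in the subgroup of GL(2l,k) generated by the elementary split orthogonal matrices such that g = E · diag(1,…,1,λ,1,…,1,λ⁻¹), where the diagonal matrix has diagonal entries 1,…,1,λ in the first l positions and 1,…,1,λ⁻¹ in the last l positions. -/

import Mathlib

open Matrix

/-- The elementary split orthogonal matrices of size `2l`, with rows and columns indexed by
`Fin l ⊕ Fin l` (the first summand plays the role of the indices `1, …, l` and the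
second summand the role of `-1, …, -l`); the last constructor is the element `w_l`. -/
def orthoElem (k : Type*) [Field k] (l : ℕ) :
    Set (Matrix (Fin l ⊕ Fin l) (Fin l ⊕ Fin l) k) :=
  {M | (∃ t : k,
    (∃ i j : Fin l, i ≠ j ∧
      M = 1 + (single (Sum.inl i) (Sum.inl j) t
              - single (Sum.inr j) (Sum.inr i) t)) ∨
    (∃ i j : Fin l, i < j ∧
      M = 1 + (single (Sum.inl i) (Sum.inr j) t
              - single (Sum.inl j) (Sum.inr i) t)) ∨
    (∃ i j : Fin l, i < j ∧
      M = 1 + (single (Sum.inr i) (Sum.inl j) t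
              - single (Sum.inr j) (Sum.inl i) t))) ∨
   (∃ i : Fin l, (i : ℕ) + 1 = l ∧
      M = 1 - single (Sum.inl i) (Sum.inl i) (1 : k)
            - single (Sum.inr i) (Sum.inr i) (1 : k)
            - single (Sum.inl i) (Sum.inr i) (1 : k)
            - single (Sum.inr i) (Sum.inl i) (1 : k))}

namespace OGE

variable {k : Type*} [Field k] {l : ℕ}

abbrev Idx (l : ℕ) := Fin l ⊕ Fin l

def sw : Idx l → Idx l := Sum.elim Sum.inr Sum.inl

@[simp] lemma sw_inl (i : Fin l) : sw (Sum.inl i) = Sum.inr i := rfl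
@[simp] lemma sw_inr (i : Fin l) : sw (Sum.inr i) = Sum.inl i := rfl
@[simp] lemma sw_sw (x : Idx l) : sw (sw x) = x := by cases x <;> rfl
lemma sw_ne (x : Idx l) : sw x ≠ x := by cases x <;> simp
lemma sw_inj {x y : Idx l} (h : sw x = sw y) : x = y := by
  cases x <;> cases y <;> simp_all
lemma sw_eq_iff {x y : Idx l} : sw x = y ↔ x = sw y := by
  constructor <;> rintro rfl <;> simp

def idx : Idx l → ℕ := Sum.elim Fin.val Fin.val
@[simp] lemma idx_inl (i : Fin l) : idx (Sum.inl i) = i := rfl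
@[simp] lemma idx_inr (i : Fin l) : idx (Sum.inr i) = i := rfl
@[simp] lemma idx_sw (x : Idx l) : idx (sw x) = idx x := by cases x <;> rfl

def J (k : Type*) [Field k] (l : ℕ) : Matrix (Idx l) (Idx l) k := fromBlocks 0 1 1 0

lemma J_apply (r c : Idx l) : J k l r c = if sw r = c then (1 : k) else 0 := by
  cases r <;> cases c <;>
    simp [J, fromBlocks, one_apply, Sum.inl.injEq, Sum.inr.injEq, eq_comm] <;> rfl

lemma std_apply (a b r c : Idx l) (t : k) :
    single a b t r c = if a = r ∧ b = c then t else 0 := rfl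

lemma transpose_std (a b : Idx l) (t : k) :
    (single a b t)ᵀ = single b a t := by
  ext r c
  simp [transpose_apply, std_apply, and_comm]

lemma J_mul (M : Matrix (Idx l) (Idx l) k) (r c : Idx l) :
    (J k l * M) r c = M (sw r) c := by
  rw [mul_apply]
  rw [Finset.sum_eq_single (sw r)]
  · rw [J_apply]; simp
  · intro b _ hb
    rw [J_apply, if_neg, zero_mul]
    exact fun h => hb h.symm
  · simp

lemma mul_J (M : Matrix (Idx l) (Idx l) k) (r c : Idx l) :
    (M * J k l) r c = M r (sw c) := by
  rw [mul_apply]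
  rw [Finset.sum_eq_single (sw c)]
  · rw [J_apply]; simp
  · intro b _ hb
    rw [J_apply, if_neg, mul_zero]
    intro h
    exact hb (by rw [← h, sw_sw])
  · simp

lemma J_mul_std (a b : Idx l) (t : k) :
    J k l * single a b t = single (sw a) b t := by
  ext r c
  rw [J_mul, std_apply, std_apply]
  refine if_congr ?_ rfl rfl
  constructor
  · rintro ⟨h1, h2⟩
    exact ⟨by rw [h1, sw_sw], h2⟩
  · rintro ⟨h1, h2⟩
    exact ⟨by rw [← h1, sw_sw], h2⟩

lemma std_mul_J (a b : Idx l) (t : k) :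
    single a b t * J k l = single a (sw b) t := by
  ext r c
  rw [mul_J, std_apply, std_apply]
  refine if_congr ?_ rfl rfl
  constructor
  · rintro ⟨h1, h2⟩
    exact ⟨h1, by rw [h2, sw_sw]⟩
  · rintro ⟨h1, h2⟩
    exact ⟨h1, by rw [← h2, sw_sw]⟩

lemma J_mul_J : J k l * J k l = 1 := by
  ext r c
  rw [J_mul, J_apply, one_apply, sw_sw]


/-! ### generators -/

def T (a b : Idx l) (t : k) : Matrix (Idx l) (Idx l) k :=
  1 + (single a b t - single (sw b) (sw a) t)

def W (i : Fin l) : Matrix (Idx l) (Idx l) k :=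
  1 - single (Sum.inl i) (Sum.inl i) (1 : k)
    - single (Sum.inr i) (Sum.inr i) (1 : k)
    - single (Sum.inl i) (Sum.inr i) (1 : k)
    - single (Sum.inr i) (Sum.inl i) (1 : k)

lemma T_mem_ll (i j : Fin l) (h : i ≠ j) (t : k) :
    T (Sum.inl i) (Sum.inl j) t ∈ orthoElem k l :=
  Or.inl ⟨t, Or.inl ⟨i, j, h, rfl⟩⟩

lemma T_mem_lr (i j : Fin l) (h : i < j) (t : k) :
    T (Sum.inl i) (Sum.inr j) t ∈ orthoElem k l :=
  Or.inl ⟨t, Or.inr (Or.inl ⟨i, j, h, rfl⟩)⟩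

lemma T_mem_rl (i j : Fin l) (h : i < j) (t : k) :
    T (Sum.inr i) (Sum.inl j) t ∈ orthoElem k l :=
  Or.inl ⟨t, Or.inr (Or.inr ⟨i, j, h, rfl⟩)⟩

lemma W_mem (i : Fin l) (h : (i : ℕ) + 1 = l) : (W i : Matrix (Idx l) (Idx l) k) ∈ orthoElem k l :=
  Or.inr ⟨i, h, rfl⟩

lemma T_apply (a b r c : Idx l) (t : k) :
    T a b t r c = (if r = c then 1 else 0)
      + ((if a = r ∧ b = c then t else 0) - (if sw b = r ∧ sw a = c then t else 0)) := by
  simp [T, Matrix.add_apply, Matrix.sub_apply, one_apply, std_apply]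

lemma W_apply (i : Fin l) (r c : Idx l) :
    (W i : Matrix (Idx l) (Idx l) k) r c = (if r = c then 1 else 0)
      - (if Sum.inl i = r ∧ Sum.inl i = c then 1 else 0)
      - (if Sum.inr i = r ∧ Sum.inr i = c then 1 else 0)
      - (if Sum.inl i = r ∧ Sum.inr i = c then 1 else 0)
      - (if Sum.inr i = r ∧ Sum.inl i = c then 1 else 0) := by
  simp [W, Matrix.sub_apply, one_apply, std_apply]

lemma std_mulVec (a b : Idx l) (t : k) (v : Idx l → k) (r : Idx l) :
    (single a b t).mulVec v r = if r = a then t * v b else 0 := by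
  rw [mulVec, dotProduct]
  rcases eq_or_ne r a with rfl | h
  · rw [if_pos rfl, Finset.sum_eq_single b]
    · simp [std_apply]
    · intro s _ hs
      rw [std_apply, if_neg, zero_mul]
      rintro ⟨-, rfl⟩; exact hs rfl
    · simp
  · rw [if_neg h]
    apply Finset.sum_eq_zero
    intro s _
    rw [std_apply, if_neg, zero_mul]
    rintro ⟨rfl, -⟩; exact h rfl

lemma T_mulVec (a b : Idx l) (t : k) (v : Idx l → k) (r : Idx l) :
    (T a b t).mulVec v r
      = v r + ((if r = a then t * v b else 0) - (if r = sw b then t * v (sw a) else 0)) := by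
  simp [T, add_mulVec, sub_mulVec, std_mulVec, one_mulVec]


/-! ### orthogonality of generators -/

def Orth (g : Matrix (Idx l) (Idx l) k) : Prop := gᵀ * J k l * g = J k l

lemma std_mul_ne {a b c d : Idx l} (h : b ≠ c) (s t : k) :
    single a b s * single c d t = (0 : Matrix (Idx l) (Idx l) k) :=
  single_mul_single_of_ne _ _ _ _ h _

lemma T_orth (a b : Idx l) (hab : a ≠ b) (t : k) : Orth (T a b t) := by
  have h1 : a ≠ sw a := (sw_ne a).symm
  have h2 : b ≠ sw b := (sw_ne b).symm
  have h3 : a ≠ b := hab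
  have h4 : b ≠ a := hab.symm
  have h5 : sw b ≠ sw a := fun h => hab (sw_inj h).symm
  have h6 : sw a ≠ sw b := fun h => hab (sw_inj h)
  have h7 : sw b ≠ b := sw_ne b
  unfold Orth
  simp only [T, transpose_add, transpose_one, transpose_sub, transpose_std,
    add_mul, mul_add, sub_mul, mul_sub, one_mul, mul_one, mul_assoc]
  simp only [J_mul_std, std_mul_J, sw_sw, std_mul_ne h1, std_mul_ne h2,
    std_mul_ne h3, std_mul_ne h4, std_mul_ne h5, std_mul_ne h6, std_mul_ne h7]
  abel

lemma W_orth (i : Fin l) : Orth (W i : Matrix (Idx l) (Idx l) k) := by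
  have hxy : (Sum.inl i : Idx l) ≠ Sum.inr i := by simp
  have hyx : (Sum.inr i : Idx l) ≠ Sum.inl i := by simp
  unfold Orth W
  simp only [transpose_sub, transpose_one, transpose_std,
    add_mul, mul_add, sub_mul, mul_sub, one_mul, mul_one, mul_assoc]
  simp only [J_mul_std, std_mul_J, sw_inl, sw_inr, single_mul_single_same,
    std_mul_ne hxy, std_mul_ne hyx, one_mul]
  abel

/-! ### inverses -/

lemma std_neg (a b : Idx l) (t : k) :
    single a b (-t) = -single a b t := by
  ext r c
  simp only [std_apply, neg_apply]
  split <;> rename_i h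
  · show -t = -(single a b t r c)
    rw [std_apply, if_pos h]
  · show (0 : k) = -(single a b t r c)
    rw [std_apply, if_neg h, neg_zero]

lemma T_mul_T_neg (a b : Idx l) (hab : a ≠ b) (t : k) :
    T a b t * T a b (-t) = 1 := by
  have h1 : b ≠ a := hab.symm
  have h2 : b ≠ sw b := (sw_ne b).symm
  have h3 : sw a ≠ a := sw_ne a
  have h4 : sw a ≠ sw b := fun h => hab (sw_inj h)
  unfold T
  simp only [add_mul, mul_add, sub_mul, mul_sub, one_mul, mul_one, mul_assoc,
    std_mul_ne h1, std_mul_ne h2, std_mul_ne h3, std_mul_ne h4]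
  simp only [std_neg]
  abel

lemma W_mul_W (i : Fin l) : (W i : Matrix (Idx l) (Idx l) k) * W i = 1 := by
  have hxy : (Sum.inl i : Idx l) ≠ Sum.inr i := by simp
  have hyx : (Sum.inr i : Idx l) ≠ Sum.inl i := by simp
  unfold W
  simp only [add_mul, mul_add, sub_mul, mul_sub, one_mul, mul_one, mul_assoc,
    single_mul_single_same, std_mul_ne hxy, std_mul_ne hyx]
  abel


/-! ### Fix and colStd -/

def Fix (m : ℕ) (g : Matrix (Idx l) (Idx l) k) : Prop :=
  ∀ r c : Idx l, (idx r < m ∨ idx c < m) → g r c = if r = c then 1 else 0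

lemma Fix_one (m : ℕ) : Fix m (1 : Matrix (Idx l) (Idx l) k) :=
  fun _ _ _ => one_apply

lemma Fix_mul {m : ℕ} {A B : Matrix (Idx l) (Idx l) k} (hA : Fix m A) (hB : Fix m B) :
    Fix m (A * B) := by
  intro r c h
  rw [mul_apply]
  rcases h with h | h
  · have e : ∀ s, A r s * B s c = if r = s then B s c else 0 := by
      intro s
      rw [hA r s (Or.inl h)]
      split <;> simp
    simp_rw [e]
    rw [Finset.sum_ite_eq Finset.univ r (fun s => B s c), if_pos (Finset.mem_univ r)]
    exact hB r c (Or.inl h)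
  · have e : ∀ s, A r s * B s c = if s = c then A r s else 0 := by
      intro s
      rw [hB s c (Or.inr h)]
      split <;> simp
    simp_rw [e]
    rw [Finset.sum_ite_eq' Finset.univ c (fun s => A r s), if_pos (Finset.mem_univ c)]
    exact hA r c (Or.inr h)

lemma Fix_T {m : ℕ} (a b : Idx l) (t : k) (ha : m ≤ idx a) (hb : m ≤ idx b) :
    Fix m (T a b t) := by
  intro r c h
  rw [T_apply]
  have h1 : ¬(a = r ∧ b = c) := by
    rintro ⟨rfl, rfl⟩
    rcases h with h | h <;> omega
  have h2 : ¬(sw b = r ∧ sw a = c) := by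
    rintro ⟨rfl, rfl⟩
    rcases h with h | h <;> simp [idx_sw] at h <;> omega
  rw [if_neg h1, if_neg h2]
  ring

def colStd (g : Matrix (Idx l) (Idx l) k) (x : Idx l) : Prop :=
  ∀ r, g r x = if r = x then 1 else 0

lemma colStd_mul {A B : Matrix (Idx l) (Idx l) k} {x : Idx l}
    (hA : colStd A x) (hB : colStd B x) : colStd (A * B) x := by
  intro r
  rw [mul_apply]
  have e : ∀ s, A r s * B s x = if s = x then A r s else 0 := by
    intro s
    rw [hB s]
    split <;> simp
  simp_rw [e]
  rw [Finset.sum_ite_eq' Finset.univ x (fun s => A r s), if_pos (Finset.mem_univ x)]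
  exact hA r

lemma colStd_one (x : Idx l) : colStd (1 : Matrix (Idx l) (Idx l) k) x :=
  fun _ => one_apply

lemma colStd_T {a b x : Idx l} (t : k) (h1 : x ≠ b) (h2 : x ≠ sw a) :
    colStd (T a b t) x := by
  intro r
  rw [T_apply]
  have e1 : ¬(a = r ∧ b = x) := by rintro ⟨-, rfl⟩; exact h1 rfl
  have e2 : ¬(sw b = r ∧ sw a = x) := by rintro ⟨-, rfl⟩; exact h2 rfl
  rw [if_neg e1, if_neg e2]
  ring

lemma Fix_col {m : ℕ} {g : Matrix (Idx l) (Idx l) k} (h : Fix m g) {x : Idx l}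
    (hx : idx x < m) : colStd g x :=
  fun r => h r x (Or.inr hx)

/-! ### the bilinear form -/

def Bf (u v : Idx l → k) : k := ∑ r : Idx l, u r * v (sw r)

def swEquiv (l : ℕ) : Idx l ≃ Idx l := ⟨sw, sw, sw_sw, sw_sw⟩

lemma Bf_entry (g : Matrix (Idx l) (Idx l) k) (x y : Idx l) :
    (gᵀ * J k l * g) x y = Bf (fun r => g r x) (fun r => g r y) := by
  rw [mul_apply]
  have e : ∀ s, (gᵀ * J k l) x s = g (sw s) x := by
    intro s
    rw [mul_J, transpose_apply]
  simp_rw [e]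
  rw [Bf]
  exact Fintype.sum_equiv (swEquiv l) _ _ (fun s => by simp [swEquiv])

lemma orth_cols {g : Matrix (Idx l) (Idx l) k} (hO : Orth g) (x y : Idx l) :
    Bf (fun r => g r x) (fun r => g r y) = if sw x = y then 1 else 0 := by
  rw [← Bf_entry, hO, J_apply]

lemma row_std_of_colStd {g : Matrix (Idx l) (Idx l) k} (hO : Orth g) {x : Idx l}
    (hc : colStd g x) (c : Idx l) : g (sw x) c = if sw x = c then 1 else 0 := by
  have h := orth_cols hO x c
  rw [Bf] at h
  have e : ∀ r, g r x * g (sw r) c = if r = x then g (sw r) c else 0 := by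
    intro r
    rw [hc r]
    split <;> simp
  simp_rw [e] at h
  rw [Finset.sum_ite_eq' Finset.univ x (fun r => g (sw r) c),
    if_pos (Finset.mem_univ x)] at h
  exact h

lemma fix_of_cols {g : Matrix (Idx l) (Idx l) k} {m : ℕ} (hO : Orth g)
    (h : ∀ x : Idx l, idx x < m → colStd g x) : Fix m g := by
  intro r c hrc
  rcases hrc with hr | hc'
  · have := row_std_of_colStd hO (h (sw r) (by simpa using hr)) c
    rwa [sw_sw] at this
  · exact h c hc' r

lemma Bf_pair (mF : Fin l) (u v : Idx l → k)
    (hu : ∀ x, x ≠ Sum.inl mF → x ≠ Sum.inr mF → u x = 0) :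
    Bf u v = u (Sum.inl mF) * v (Sum.inr mF) + u (Sum.inr mF) * v (Sum.inl mF) := by
  rw [Bf, ← Finset.sum_subset (Finset.subset_univ {Sum.inl mF, Sum.inr mF})]
  · rw [Finset.sum_pair (by simp : (Sum.inl mF : Idx l) ≠ Sum.inr mF)]
    simp
  · intro x _ hx
    simp only [Finset.mem_insert, Finset.mem_singleton] at hx
    push_neg at hx
    rw [hu x hx.1 hx.2, zero_mul]

/-! ### determinant and closure -/

lemma orth_isUnit_det {g : Matrix (Idx l) (Idx l) k} (hO : Orth g) : IsUnit g.det := by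
  have hJ : (J k l).det * (J k l).det = 1 := by rw [← det_mul, J_mul_J, det_one]
  have hJu : IsUnit (J k l).det := IsUnit.of_mul_eq_one _ hJ
  have h2 := congrArg det hO
  rw [det_mul, det_mul, det_transpose] at h2
  have h3 : g.det * g.det = 1 := by
    apply mul_right_cancel₀ hJu.ne_zero
    rw [one_mul]
    linear_combination h2
  exact IsUnit.of_mul_eq_one _ h3

lemma col_ne_zero {g : Matrix (Idx l) (Idx l) k} (hO : Orth g) (x : Idx l) :
    (fun r => g r x) ≠ 0 := by
  intro h
  have : g.det = 0 := det_eq_zero_of_column_eq_zero x (fun i => congrFun h i)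
  exact (orth_isUnit_det hO).ne_zero this

lemma col_mul (A B : Matrix (Idx l) (Idx l) k) (x : Idx l) :
    (fun r => (A * B) r x) = A.mulVec (fun r => B r x) := by
  funext r
  rw [mul_apply, mulVec, dotProduct]

lemma gen_orth {x : Matrix (Idx l) (Idx l) k} (hx : x ∈ orthoElem k l) : Orth x := by
  rcases hx with ⟨t, ⟨i, j, hij, rfl⟩ | ⟨i, j, hij, rfl⟩ | ⟨i, j, hij, rfl⟩⟩ | ⟨i, hi, rfl⟩
  · exact T_orth (Sum.inl i) (Sum.inl j) (by simp [hij]) t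
  · exact T_orth (Sum.inl i) (Sum.inr j) (by simp) t
  · exact T_orth (Sum.inr i) (Sum.inl j) (by simp) t
  · exact W_orth i

lemma orth_one : Orth (1 : Matrix (Idx l) (Idx l) k) := by
  unfold Orth
  rw [transpose_one, one_mul, mul_one]

lemma orth_mul {A B : Matrix (Idx l) (Idx l) k} (hA : Orth A) (hB : Orth B) :
    Orth (A * B) := by
  unfold Orth at *
  rw [transpose_mul]
  rw [show Bᵀ * Aᵀ * J k l * (A * B) = Bᵀ * (Aᵀ * J k l * A) * B by noncomm_ring, hA, hB]

lemma closure_orth {E : Matrix (Idx l) (Idx l) k}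
    (hE : E ∈ Submonoid.closure (orthoElem k l)) : Orth E := by
  induction hE using Submonoid.closure_induction with
  | mem x hx => exact gen_orth hx
  | one => exact orth_one
  | mul x y _ _ hx hy => exact orth_mul hx hy

lemma gen_inv {x : Matrix (Idx l) (Idx l) k} (hx : x ∈ orthoElem k l) :
    ∃ y ∈ orthoElem k l, y * x = 1 ∧ x * y = 1 := by
  rcases hx with ⟨t, ⟨i, j, hij, rfl⟩ | ⟨i, j, hij, rfl⟩ | ⟨i, j, hij, rfl⟩⟩ | ⟨i, hi, rfl⟩
  · refine ⟨T (Sum.inl i) (Sum.inl j) (-t), T_mem_ll i j hij (-t), ?_, ?_⟩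
    · have := T_mul_T_neg (Sum.inl i) (Sum.inl j) (by simp [hij]) (-t)
      rwa [neg_neg] at this
    · exact T_mul_T_neg (Sum.inl i) (Sum.inl j) (by simp [hij]) t
  · refine ⟨T (Sum.inl i) (Sum.inr j) (-t), T_mem_lr i j hij (-t), ?_, ?_⟩
    · have := T_mul_T_neg (Sum.inl i) (Sum.inr j) (by simp) (-t)
      rwa [neg_neg] at this
    · exact T_mul_T_neg (Sum.inl i) (Sum.inr j) (by simp) t
  · refine ⟨T (Sum.inr i) (Sum.inl j) (-t), T_mem_rl i j hij (-t), ?_, ?_⟩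
    · have := T_mul_T_neg (Sum.inr i) (Sum.inl j) (by simp) (-t)
      rwa [neg_neg] at this
    · exact T_mul_T_neg (Sum.inr i) (Sum.inl j) (by simp) t
  · exact ⟨W i, W_mem i hi, W_mul_W i, W_mul_W i⟩

lemma closure_inv {E : Matrix (Idx l) (Idx l) k}
    (hE : E ∈ Submonoid.closure (orthoElem k l)) :
    ∃ F ∈ Submonoid.closure (orthoElem k l), F * E = 1 ∧ E * F = 1 := by
  induction hE using Submonoid.closure_induction with
  | mem x hx =>
    obtain ⟨y, hy, h1, h2⟩ := gen_inv hx
    exact ⟨y, Submonoid.subset_closure hy, h1, h2⟩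
  | one => exact ⟨1, one_mem _, one_mul 1, one_mul 1⟩
  | mul x y _ _ hx hy =>
    obtain ⟨fx, hfx, hfx1, hfx2⟩ := hx
    obtain ⟨fy, hfy, hfy1, hfy2⟩ := hy
    refine ⟨fy * fx, mul_mem hfy hfx, ?_, ?_⟩
    · rw [show fy * fx * (x * y) = fy * (fx * x) * y by noncomm_ring, hfx1, mul_one, hfy1]
    · rw [show x * y * (fy * fx) = x * (y * fy) * fx by noncomm_ring, hfy2, mul_one, hfx2]


/-! ### coordinate helpers -/

lemma inl_ne_inr (i j : Fin l) : (Sum.inl i : Idx l) ≠ Sum.inr j := by simp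

lemma inr_ne_inl (i j : Fin l) : (Sum.inr i : Idx l) ≠ Sum.inl j := by simp

lemma inl_ne_inl {i j : Fin l} (h : (i : ℕ) ≠ (j : ℕ)) :
    (Sum.inl i : Idx l) ≠ Sum.inl j := by
  simpa using Fin.ne_of_val_ne h

lemma inr_ne_inr {i j : Fin l} (h : (i : ℕ) ≠ (j : ℕ)) :
    (Sum.inr i : Idx l) ≠ Sum.inr j := by
  simpa using Fin.ne_of_val_ne h

lemma T_mulVec_ne (a b : Idx l) (t : k) (v : Idx l → k) {x : Idx l}
    (h1 : x ≠ a) (h2 : x ≠ sw b) : (T a b t).mulVec v x = v x := by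
  rw [T_mulVec, if_neg h1, if_neg h2]
  ring

lemma T_mulVec_fst (a b : Idx l) (t : k) (v : Idx l → k) (h : a ≠ sw b) :
    (T a b t).mulVec v a = v a + t * v b := by
  rw [T_mulVec, if_pos rfl, if_neg h]
  ring

lemma T_mulVec_snd (a b : Idx l) (t : k) (v : Idx l → k) (h : sw b ≠ a) :
    (T a b t).mulVec v (sw b) = v (sw b) - t * v (sw a) := by
  rw [T_mulVec, if_neg h, if_pos rfl]
  ring

/-! ### stage 0 : make the (inl mF)-coordinate nonzero -/

lemma stage0 {m : ℕ} {mF m1 : Fin l} (hmF : (mF : ℕ) = m) (hm1 : (m1 : ℕ) = m + 1)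
    (v : Idx l → k) (hv : v ≠ 0) (hsupp : ∀ x : Idx l, idx x < m → v x = 0) :
    ∃ E ∈ Submonoid.closure (orthoElem k l), Fix m E ∧
      (E.mulVec v) (Sum.inl mF) ≠ 0 := by
  by_cases hp : v (Sum.inl mF) ≠ 0
  · exact ⟨1, one_mem _, Fix_one m, by rwa [one_mulVec]⟩
  push_neg at hp
  obtain ⟨x, hx⟩ := Function.ne_iff.mp hv
  rw [Pi.zero_apply] at hx
  have hxm : m ≤ idx x := by
    by_contra h
    push_neg at h
    exact hx (hsupp x h)
  cases x with
  | inl j =>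
    have hj : (mF : ℕ) ≠ (j : ℕ) := by
      intro h
      apply hx
      have : j = mF := Fin.val_injective (by omega)
      rw [this, hp]
    refine ⟨T (Sum.inl mF) (Sum.inl j) (v (Sum.inl j))⁻¹,
      Submonoid.subset_closure (T_mem_ll mF j (Fin.ne_of_val_ne hj) _),
      Fix_T _ _ _ (by simp [hmF]) (by simpa using hxm), ?_⟩
    rw [T_mulVec_fst _ _ _ _ (by simp), hp, inv_mul_cancel₀ hx, zero_add]
    exact one_ne_zero
  | inr j =>
    by_cases hj : j = mF
    · subst hj
      have hq : v (Sum.inr j) ≠ 0 := hx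
      have hne1 : (j : ℕ) ≠ (m1 : ℕ) := by omega
      have hlt1 : j < m1 := by
        rw [Fin.lt_def]
        omega
      set t := (v (Sum.inl m1) - 1) / v (Sum.inr j) with ht
      set E1 : Matrix (Idx l) (Idx l) k := T (Sum.inl j) (Sum.inr m1) t with hE1
      have hv1 : (E1.mulVec v) (Sum.inl m1) = 1 := by
        have : (Sum.inl m1 : Idx l) = sw (Sum.inr m1) := rfl
        rw [hE1, this, T_mulVec_snd _ _ _ _ (by rw [← this]; exact inl_ne_inl (by omega)),
          ← this, sw_inl, div_mul_cancel₀ _ hq]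
        ring
      set s := 1 - (E1.mulVec v) (Sum.inl j) with hs
      refine ⟨T (Sum.inl j) (Sum.inl m1) s * E1,
        mul_mem (Submonoid.subset_closure (T_mem_ll j m1 (Fin.ne_of_val_ne hne1) s))
          (Submonoid.subset_closure (T_mem_lr j m1 hlt1 t)), ?_, ?_⟩
      · exact Fix_mul (Fix_T _ _ _ (by simp [hmF]) (by simp [hm1]))
          (Fix_T _ _ _ (by simp [hmF]) (by simp [hm1]))
      · rw [← mulVec_mulVec, T_mulVec_fst _ _ _ _ (by simp), hv1]
        have : (E1.mulVec v) (Sum.inl j) + s * 1 = 1 := by rw [hs]; ring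
        rw [this]
        exact one_ne_zero
    · have hjm : m < (j : ℕ) := by
        have : m ≤ (j : ℕ) := by simpa using hxm
        rcases this.lt_or_eq with h | h
        · exact h
        · exact absurd (Fin.val_injective (by omega) : j = mF) hj
      refine ⟨T (Sum.inl mF) (Sum.inr j) (v (Sum.inr j))⁻¹,
        Submonoid.subset_closure (T_mem_lr mF j (by rw [Fin.lt_def]; omega) _),
        Fix_T _ _ _ (by simp [hmF]) (by simp; omega), ?_⟩
      rw [T_mulVec_fst _ _ _ _ (by rw [sw_inr]; exact inl_ne_inl (by omega)), hp,
        inv_mul_cancel₀ hx, zero_add]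
      exact one_ne_zero


/-! ### stage 1 : clear the column, keeping the (inl mF) entry -/

lemma kill1 {m : ℕ} {mF : Fin l} (hmF : (mF : ℕ) = m) (S : Finset (Fin l)) :
    (∀ j ∈ S, m < (j : ℕ)) → ∀ v : Idx l → k, v (Sum.inl mF) ≠ 0 →
    (∀ j : Fin l, (j : ℕ) ≠ m → j ∉ S → v (Sum.inl j) = 0 ∧ v (Sum.inr j) = 0) →
    ∃ E ∈ Submonoid.closure (orthoElem k l), Fix m E ∧
      (E.mulVec v) (Sum.inl mF) = v (Sum.inl mF) ∧
      ∀ x, x ≠ Sum.inl mF → x ≠ Sum.inr mF → (E.mulVec v) x = 0 := by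
  classical
  induction S using Finset.induction_on with
  | empty =>
    intro _ v hp hz
    refine ⟨1, one_mem _, Fix_one m, by rw [one_mulVec], ?_⟩
    intro x h1 h2
    rw [one_mulVec]
    cases x with
    | inl j =>
      refine (hz j ?_ (Finset.notMem_empty j)).1
      intro h
      exact h1 (by rw [show j = mF from Fin.val_injective (by omega)])
    | inr j =>
      refine (hz j ?_ (Finset.notMem_empty j)).2
      intro h
      exact h2 (by rw [show j = mF from Fin.val_injective (by omega)])
  | @insert a S' ha IH =>
    intro hS v hp hz
    have hma : m < (a : ℕ) := hS a (Finset.mem_insert_self a S')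
    have hane : (a : ℕ) ≠ (mF : ℕ) := by omega
    set p := v (Sum.inl mF) with hpdef
    set EA : Matrix (Idx l) (Idx l) k := T (Sum.inl a) (Sum.inl mF) (-(v (Sum.inl a)) / p)
      with hEA
    set v1 := EA.mulVec v with hv1def
    have hv1a : v1 (Sum.inl a) = 0 := by
      rw [hv1def, hEA, T_mulVec_fst _ _ _ _ (by rw [sw_inl]; exact inl_ne_inr a mF),
        div_mul_cancel₀ _ hp]
      ring
    have hv1p : v1 (Sum.inl mF) = p := by
      rw [hv1def, hEA, T_mulVec_ne _ _ _ _ (inl_ne_inl (by omega))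
        (by rw [sw_inl]; exact inl_ne_inr mF mF)]
    have hv1other : ∀ x, x ≠ Sum.inl a → x ≠ Sum.inr mF → v1 x = v x := by
      intro x h1 h2
      rw [hv1def, hEA, T_mulVec_ne _ _ _ _ h1 (by rwa [sw_inl])]
    set EB : Matrix (Idx l) (Idx l) k := T (Sum.inr mF) (Sum.inl a) (v (Sum.inr a) / p)
      with hEB
    set v2 := EB.mulVec v1 with hv2def
    have hv2ra : v2 (Sum.inr a) = 0 := by
      have e : (Sum.inr a : Idx l) = sw (Sum.inl a) := rfl
      rw [hv2def, hEB, e, T_mulVec_snd _ _ _ _ (by rw [← e]; exact inr_ne_inr hane), ← e,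
        sw_inr, hv1p, div_mul_cancel₀ _ hp,
        hv1other _ (inr_ne_inl a a) (inr_ne_inr hane)]
      ring
    have hv2other : ∀ x, x ≠ Sum.inr mF → x ≠ Sum.inr a → v2 x = v1 x := by
      intro x h1 h2
      rw [hv2def, hEB, T_mulVec_ne _ _ _ _ h1 (by rwa [sw_inl])]
    have hv2p : v2 (Sum.inl mF) = p := by
      rw [hv2other _ (inl_ne_inr mF mF) (inl_ne_inr mF a), hv1p]
    have hv2la : v2 (Sum.inl a) = 0 := by
      rw [hv2other _ (inl_ne_inr a mF) (inl_ne_inr a a), hv1a]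
    have hz2 : ∀ j : Fin l, (j : ℕ) ≠ m → j ∉ S' → v2 (Sum.inl j) = 0 ∧ v2 (Sum.inr j) = 0 := by
      intro j hjm hjS
      by_cases hja : j = a
      · subst hja
        exact ⟨hv2la, hv2ra⟩
      · have hjane : (j : ℕ) ≠ (a : ℕ) := fun h => hja (Fin.val_injective h)
        have hjmF : (j : ℕ) ≠ (mF : ℕ) := by omega
        have h1 : v2 (Sum.inl j) = 0 := by
          rw [hv2other _ (inl_ne_inr j mF) (inl_ne_inr j a),
            hv1other _ (inl_ne_inl hjane) (inl_ne_inr j mF)]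
          exact (hz j hjm (by simp [hja, hjS])).1
        have h2 : v2 (Sum.inr j) = 0 := by
          rw [hv2other _ (inr_ne_inr hjmF) (inr_ne_inr hjane),
            hv1other _ (inr_ne_inl j a) (inr_ne_inr hjmF)]
          exact (hz j hjm (by simp [hja, hjS])).2
        exact ⟨h1, h2⟩
    have hp2 : v2 (Sum.inl mF) ≠ 0 := by rw [hv2p]; exact hp
    obtain ⟨E', hE'mem, hE'fix, hE'p, hE'z⟩ :=
      IH (fun j hj => hS j (Finset.mem_insert_of_mem hj)) v2 hp2 hz2
    have key : (E' * (EB * EA)).mulVec v = E'.mulVec v2 := by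
      rw [hv2def, hv1def, mulVec_mulVec, mulVec_mulVec, Matrix.mul_assoc]
    refine ⟨E' * (EB * EA), mul_mem hE'mem (mul_mem
        (Submonoid.subset_closure (T_mem_rl mF a (by rw [Fin.lt_def]; omega) _))
        (Submonoid.subset_closure (T_mem_ll a mF (Fin.ne_of_val_ne hane) _))), ?_, ?_, ?_⟩
    · exact Fix_mul hE'fix (Fix_mul
        (Fix_T _ _ _ (by simp [hmF]) (by simp; omega))
        (Fix_T _ _ _ (by simp; omega) (by simp [hmF])))
    · rw [key, hE'p, hv2p]
    · intro x h1 h2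
      rw [key]
      exact hE'z x h1 h2


/-! ### stage 1.5 : rescale `p • e_{inl mF}` to `e_{inl mF}` -/

lemma scale1 {m : ℕ} {mF m1 : Fin l} (hmF : (mF : ℕ) = m) (hm1 : (m1 : ℕ) = m + 1)
    (v : Idx l → k) (hp : v (Sum.inl mF) ≠ 0)
    (hz : ∀ x, x ≠ Sum.inl mF → v x = 0) :
    ∃ E ∈ Submonoid.closure (orthoElem k l), Fix m E ∧
      ∀ r, (E.mulVec v) r = if r = Sum.inl mF then 1 else 0 := by
  have hne : (m1 : ℕ) ≠ (mF : ℕ) := by omega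
  set p := v (Sum.inl mF) with hpdef
  set A1 : Matrix (Idx l) (Idx l) k := T (Sum.inl m1) (Sum.inl mF) 1 with hA1
  set u1 := A1.mulVec v with hu1def
  have hu1m1 : u1 (Sum.inl m1) = p := by
    rw [hu1def, hA1, T_mulVec_fst _ _ _ _ (by rw [sw_inl]; exact inl_ne_inr m1 mF),
      hz (Sum.inl m1) (inl_ne_inl hne), one_mul, zero_add]
  have hu1mF : u1 (Sum.inl mF) = p := by
    rw [hu1def, hA1, T_mulVec_ne _ _ _ _ (inl_ne_inl (by omega))
      (by rw [sw_inl]; exact inl_ne_inr mF mF)]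
  have hu1z : ∀ x, x ≠ Sum.inl mF → x ≠ Sum.inl m1 → u1 x = 0 := by
    intro x h1 h2
    by_cases h3 : x = Sum.inr mF
    · subst h3
      have e : (Sum.inr mF : Idx l) = sw (Sum.inl mF) := rfl
      rw [hu1def, hA1, e, T_mulVec_snd _ _ _ _ (by rw [← e]; exact inr_ne_inl mF m1), ← e,
        sw_inl, hz (Sum.inr mF) (inr_ne_inl mF mF), hz (Sum.inr m1) (inr_ne_inl m1 mF)]
      ring
    · rw [hu1def, hA1, T_mulVec_ne _ _ _ _ h2 (by rwa [sw_inl])]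
      exact hz x h1
  set A2 : Matrix (Idx l) (Idx l) k := T (Sum.inl mF) (Sum.inl m1) ((1 - p) / p) with hA2
  set u2 := A2.mulVec u1 with hu2def
  have hu2mF : u2 (Sum.inl mF) = 1 := by
    rw [hu2def, hA2, T_mulVec_fst _ _ _ _ (by rw [sw_inl]; exact inl_ne_inr mF m1),
      hu1m1, hu1mF, div_mul_cancel₀ _ hp]
    ring
  have hu2m1 : u2 (Sum.inl m1) = p := by
    rw [hu2def, hA2, T_mulVec_ne _ _ _ _ (inl_ne_inl hne)
      (by rw [sw_inl]; exact inl_ne_inr m1 m1), hu1m1]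
  have hu2z : ∀ x, x ≠ Sum.inl mF → x ≠ Sum.inl m1 → u2 x = 0 := by
    intro x h1 h2
    by_cases h3 : x = Sum.inr m1
    · subst h3
      have e : (Sum.inr m1 : Idx l) = sw (Sum.inl m1) := rfl
      rw [hu2def, hA2, e, T_mulVec_snd _ _ _ _ (by rw [← e]; exact inr_ne_inl m1 mF), ← e,
        sw_inl, hu1z (Sum.inr m1) (inr_ne_inl m1 mF) (inr_ne_inl m1 m1),
        hu1z (Sum.inr mF) (inr_ne_inl mF mF) (inr_ne_inl mF m1)]
      ring
    · rw [hu2def, hA2, T_mulVec_ne _ _ _ _ h1 (by rwa [sw_inl])]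
      exact hu1z x h1 h2
  set A3 : Matrix (Idx l) (Idx l) k := T (Sum.inl m1) (Sum.inl mF) (-p) with hA3
  set u3 := A3.mulVec u2 with hu3def
  have hu3m1 : u3 (Sum.inl m1) = 0 := by
    rw [hu3def, hA3, T_mulVec_fst _ _ _ _ (by rw [sw_inl]; exact inl_ne_inr m1 mF),
      hu2m1, hu2mF]
    ring
  have hu3mF : u3 (Sum.inl mF) = 1 := by
    rw [hu3def, hA3, T_mulVec_ne _ _ _ _ (inl_ne_inl (by omega))
      (by rw [sw_inl]; exact inl_ne_inr mF mF), hu2mF]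
  have hu3z : ∀ x, x ≠ Sum.inl mF → x ≠ Sum.inl m1 → u3 x = 0 := by
    intro x h1 h2
    by_cases h3 : x = Sum.inr mF
    · subst h3
      have e : (Sum.inr mF : Idx l) = sw (Sum.inl mF) := rfl
      rw [hu3def, hA3, e, T_mulVec_snd _ _ _ _ (by rw [← e]; exact inr_ne_inl mF m1), ← e,
        sw_inl, hu2z (Sum.inr mF) (inr_ne_inl mF mF) (inr_ne_inl mF m1),
        hu2z (Sum.inr m1) (inr_ne_inl m1 mF) (inr_ne_inl m1 m1)]
      ring
    · rw [hu3def, hA3, T_mulVec_ne _ _ _ _ h2 (by rwa [sw_inl])]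
      exact hu2z x h1 h2
  have key : (A3 * (A2 * A1)).mulVec v = u3 := by
    rw [hu3def, hu2def, hu1def, mulVec_mulVec, mulVec_mulVec, Matrix.mul_assoc]
  refine ⟨A3 * (A2 * A1), mul_mem
      (Submonoid.subset_closure (T_mem_ll m1 mF (Fin.ne_of_val_ne hne) (-p)))
      (mul_mem
        (Submonoid.subset_closure (T_mem_ll mF m1 (Fin.ne_of_val_ne (by omega)) _))
        (Submonoid.subset_closure (T_mem_ll m1 mF (Fin.ne_of_val_ne hne) 1))), ?_, ?_⟩
  · exact Fix_mul (Fix_T _ _ _ (by simp [hm1]) (by simp [hmF]))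
      (Fix_mul (Fix_T _ _ _ (by simp [hmF]) (by simp [hm1]))
        (Fix_T _ _ _ (by simp [hm1]) (by simp [hmF])))
  · intro r
    rw [key]
    rcases eq_or_ne r (Sum.inl mF) with rfl | h1
    · rw [if_pos rfl, hu3mF]
    · rw [if_neg h1]
      rcases eq_or_ne r (Sum.inl m1) with rfl | h2
      · exact hu3m1
      · exact hu3z r h1 h2

/-! ### stage 2 : clear the `inr mF` column, fixing `e_{inl mF}` -/

lemma kill2 {m : ℕ} {mF : Fin l} (hmF : (mF : ℕ) = m) (S : Finset (Fin l)) :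
    (∀ j ∈ S, m < (j : ℕ)) → ∀ u : Idx l → k, u (Sum.inr mF) ≠ 0 →
    (∀ j : Fin l, (j : ℕ) ≠ m → j ∉ S → u (Sum.inl j) = 0 ∧ u (Sum.inr j) = 0) →
    ∃ E ∈ Submonoid.closure (orthoElem k l), Fix m E ∧ colStd E (Sum.inl mF) ∧
      (E.mulVec u) (Sum.inr mF) = u (Sum.inr mF) ∧
      ∀ x, x ≠ Sum.inl mF → x ≠ Sum.inr mF → (E.mulVec u) x = 0 := by
  classical
  induction S using Finset.induction_on with
  | empty =>
    intro _ u hq hz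
    refine ⟨1, one_mem _, Fix_one m, colStd_one _, by rw [one_mulVec], ?_⟩
    intro x h1 h2
    rw [one_mulVec]
    cases x with
    | inl j =>
      refine (hz j ?_ (Finset.notMem_empty j)).1
      intro h
      exact h1 (by rw [show j = mF from Fin.val_injective (by omega)])
    | inr j =>
      refine (hz j ?_ (Finset.notMem_empty j)).2
      intro h
      exact h2 (by rw [show j = mF from Fin.val_injective (by omega)])
  | @insert a S' ha IH =>
    intro hS u hq hz
    have hma : m < (a : ℕ) := hS a (Finset.mem_insert_self a S')
    have hane : (a : ℕ) ≠ (mF : ℕ) := by omega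
    set q := u (Sum.inr mF) with hqdef
    set EA : Matrix (Idx l) (Idx l) k := T (Sum.inl mF) (Sum.inl a) (u (Sum.inr a) / q)
      with hEA
    set u1 := EA.mulVec u with hu1def
    have hu1ra : u1 (Sum.inr a) = 0 := by
      have e : (Sum.inr a : Idx l) = sw (Sum.inl a) := rfl
      rw [hu1def, hEA, e, T_mulVec_snd _ _ _ _ (by rw [← e]; exact inr_ne_inl a mF), ← e,
        sw_inl, div_mul_cancel₀ _ hq]
      ring
    have hu1other : ∀ x, x ≠ Sum.inl mF → x ≠ Sum.inr a → u1 x = u x := by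
      intro x h1 h2
      rw [hu1def, hEA, T_mulVec_ne _ _ _ _ h1 (by rwa [sw_inl])]
    have hu1q : u1 (Sum.inr mF) = q := by
      rw [hu1other _ (inr_ne_inl mF mF) (inr_ne_inr (by omega)), hqdef]
    have hu1la : u1 (Sum.inl a) = u (Sum.inl a) := by
      rw [hu1other _ (inl_ne_inl (by omega)) (inl_ne_inr a a)]
    set EB : Matrix (Idx l) (Idx l) k := T (Sum.inl mF) (Sum.inr a) (u (Sum.inl a) / q)
      with hEB
    set u2 := EB.mulVec u1 with hu2def
    have hu2la : u2 (Sum.inl a) = 0 := by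
      have e : (Sum.inl a : Idx l) = sw (Sum.inr a) := rfl
      rw [hu2def, hEB, e, T_mulVec_snd _ _ _ _ (by rw [← e]; exact inl_ne_inl hane), ← e,
        sw_inl, hu1la, hu1q, div_mul_cancel₀ _ hq]
      ring
    have hu2other : ∀ x, x ≠ Sum.inl mF → x ≠ Sum.inl a → u2 x = u1 x := by
      intro x h1 h2
      rw [hu2def, hEB, T_mulVec_ne _ _ _ _ h1 (by rwa [sw_inr])]
    have hu2ra : u2 (Sum.inr a) = 0 := by
      rw [hu2other _ (inr_ne_inl a mF) (inr_ne_inl a a), hu1ra]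
    have hu2q : u2 (Sum.inr mF) = q := by
      rw [hu2other _ (inr_ne_inl mF mF) (inr_ne_inl mF a), hu1q]
    have hz2 : ∀ j : Fin l, (j : ℕ) ≠ m → j ∉ S' →
        u2 (Sum.inl j) = 0 ∧ u2 (Sum.inr j) = 0 := by
      intro j hjm hjS
      by_cases hja : j = a
      · subst hja
        exact ⟨hu2la, hu2ra⟩
      · have hjane : (j : ℕ) ≠ (a : ℕ) := fun h => hja (Fin.val_injective h)
        have hjmF : (j : ℕ) ≠ (mF : ℕ) := by omega
        have h1 : u2 (Sum.inl j) = 0 := by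
          rw [hu2other _ (inl_ne_inl hjmF) (inl_ne_inl hjane),
            hu1other _ (inl_ne_inl hjmF) (inl_ne_inr j a)]
          exact (hz j hjm (by simp [hja, hjS])).1
        have h2 : u2 (Sum.inr j) = 0 := by
          rw [hu2other _ (inr_ne_inl j mF) (inr_ne_inl j a),
            hu1other _ (inr_ne_inl j mF) (inr_ne_inr hjane)]
          exact (hz j hjm (by simp [hja, hjS])).2
        exact ⟨h1, h2⟩
    have hq2 : u2 (Sum.inr mF) ≠ 0 := by rw [hu2q]; exact hq
    obtain ⟨E', hE'mem, hE'fix, hE'col, hE'q, hE'z⟩ :=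
      IH (fun j hj => hS j (Finset.mem_insert_of_mem hj)) u2 hq2 hz2
    have key : (E' * (EB * EA)).mulVec u = E'.mulVec u2 := by
      rw [hu2def, hu1def, mulVec_mulVec, mulVec_mulVec, Matrix.mul_assoc]
    refine ⟨E' * (EB * EA), mul_mem hE'mem (mul_mem
        (Submonoid.subset_closure (T_mem_lr mF a (by rw [Fin.lt_def]; omega) _))
        (Submonoid.subset_closure (T_mem_ll mF a (Fin.ne_of_val_ne (by omega)) _))),
      ?_, ?_, ?_, ?_⟩
    · exact Fix_mul hE'fix (Fix_mul
        (Fix_T _ _ _ (by simp [hmF]) (by simp; omega))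
        (Fix_T _ _ _ (by simp [hmF]) (by simp; omega)))
    · refine colStd_mul hE'col (colStd_mul ?_ ?_)
      · exact colStd_T _ (inl_ne_inr mF a) (by rw [sw_inl]; exact inl_ne_inr mF mF)
      · exact colStd_T _ (inl_ne_inl (by omega)) (by rw [sw_inl]; exact inl_ne_inr mF mF)
    · rw [key, hE'q, hu2q]
    · intro x h1 h2
      rw [key]
      exact hE'z x h1 h2


/-! ### the diagonal matrix -/

def Dvec (lam : kˣ) : Idx l → k :=
  Sum.elim (fun i : Fin l => if (i : ℕ) + 1 = l then (lam : k) else 1)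
    (fun i : Fin l => if (i : ℕ) + 1 = l then (lam : k)⁻¹ else 1)

lemma Dvec_small (lam : kˣ) {x : Idx l} (h : ¬ idx x + 1 = l) : Dvec lam x = 1 := by
  cases x with
  | inl i => exact if_neg h
  | inr i => exact if_neg h

lemma Dvec_inl (lam : kˣ) {mF : Fin l} (h : (mF : ℕ) + 1 = l) :
    Dvec lam (Sum.inl mF) = (lam : k) := if_pos h

lemma Dvec_inr (lam : kˣ) {mF : Fin l} (h : (mF : ℕ) + 1 = l) :
    Dvec lam (Sum.inr mF) = (lam : k)⁻¹ := if_pos h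

/-! ### base case -/

lemma base_case (hchar : ringChar k ≠ 2) (m : ℕ) (hml : m + 1 = l)
    (g : Matrix (Idx l) (Idx l) k) (hO : Orth g) (hF : Fix m g) :
    ∃ lam : kˣ, ∃ E ∈ Submonoid.closure (orthoElem k l),
      g = E * diagonal (Dvec lam) := by
  have hmlt : m < l := by omega
  set mF : Fin l := ⟨m, hmlt⟩ with hmFdef
  have hmFv : (mF : ℕ) = m := rfl
  have pair_cases : ∀ r : Idx l, idx r < m ∨ r = Sum.inl mF ∨ r = Sum.inr mF := by
    intro r
    cases r with
    | inl i =>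
      rcases lt_or_ge (i : ℕ) m with h | h
      · exact Or.inl h
      · exact Or.inr (Or.inl (by rw [show i = mF from Fin.val_injective (by omega)]))
    | inr i =>
      rcases lt_or_ge (i : ℕ) m with h | h
      · exact Or.inl h
      · exact Or.inr (Or.inr (by rw [show i = mF from Fin.val_injective (by omega)]))
  have hsupM : ∀ x, x ≠ Sum.inl mF → x ≠ Sum.inr mF → g x (Sum.inl mF) = 0 := by
    intro x h1 h2
    rcases pair_cases x with h | h | h
    · rw [hF x _ (Or.inl h), if_neg h1]
    · exact absurd h h1
    · exact absurd h h2
  have hsupN : ∀ x, x ≠ Sum.inl mF → x ≠ Sum.inr mF → g x (Sum.inr mF) = 0 := by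
    intro x h1 h2
    rcases pair_cases x with h | h | h
    · rw [hF x _ (Or.inl h), if_neg h2]
    · exact absurd h h1
    · exact absurd h h2
  have e1 : g (Sum.inl mF) (Sum.inl mF) * g (Sum.inr mF) (Sum.inl mF)
      + g (Sum.inr mF) (Sum.inl mF) * g (Sum.inl mF) (Sum.inl mF) = 0 := by
    have h := orth_cols hO (Sum.inl mF) (Sum.inl mF)
    rw [Bf_pair mF _ _ hsupM] at h
    simpa using h
  have e2 : g (Sum.inl mF) (Sum.inr mF) * g (Sum.inr mF) (Sum.inr mF)
      + g (Sum.inr mF) (Sum.inr mF) * g (Sum.inl mF) (Sum.inr mF) = 0 := by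
    have h := orth_cols hO (Sum.inr mF) (Sum.inr mF)
    rw [Bf_pair mF _ _ hsupN] at h
    simpa using h
  have e3 : g (Sum.inl mF) (Sum.inl mF) * g (Sum.inr mF) (Sum.inr mF)
      + g (Sum.inr mF) (Sum.inl mF) * g (Sum.inl mF) (Sum.inr mF) = 1 := by
    have h := orth_cols hO (Sum.inl mF) (Sum.inr mF)
    rw [Bf_pair mF _ _ hsupM] at h
    simpa using h
  have two : (2 : k) ≠ 0 := Ring.two_ne_zero hchar
  have hAC : g (Sum.inl mF) (Sum.inl mF) * g (Sum.inr mF) (Sum.inl mF) = 0 := by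
    have h : 2 * (g (Sum.inl mF) (Sum.inl mF) * g (Sum.inr mF) (Sum.inl mF)) = 0 := by
      linear_combination e1
    exact (mul_eq_zero.mp h).resolve_left two
  have hBD : g (Sum.inl mF) (Sum.inr mF) * g (Sum.inr mF) (Sum.inr mF) = 0 := by
    have h : 2 * (g (Sum.inl mF) (Sum.inr mF) * g (Sum.inr mF) (Sum.inr mF)) = 0 := by
      linear_combination e2
    exact (mul_eq_zero.mp h).resolve_left two
  have hmFl : (mF : ℕ) + 1 = l := by omega
  by_cases hA : g (Sum.inl mF) (Sum.inl mF) = 0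
  · -- antidiagonal case : use W
    have hCB : g (Sum.inr mF) (Sum.inl mF) * g (Sum.inl mF) (Sum.inr mF) = 1 := by
      rw [hA, zero_mul, zero_add] at e3
      exact e3
    have hC : g (Sum.inr mF) (Sum.inl mF) ≠ 0 := left_ne_zero_of_mul_eq_one hCB
    have hB : g (Sum.inl mF) (Sum.inr mF) ≠ 0 := right_ne_zero_of_mul_eq_one hCB
    have hD : g (Sum.inr mF) (Sum.inr mF) = 0 := (mul_eq_zero.mp hBD).resolve_left hB
    have hu1 : (-(g (Sum.inr mF) (Sum.inl mF))) * (-(g (Sum.inl mF) (Sum.inr mF))) = 1 := by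
      rw [neg_mul_neg]; exact hCB
    have hu2 : (-(g (Sum.inl mF) (Sum.inr mF))) * (-(g (Sum.inr mF) (Sum.inl mF))) = 1 := by
      rw [neg_mul_neg, mul_comm]; exact hCB
    refine ⟨⟨-(g (Sum.inr mF) (Sum.inl mF)), -(g (Sum.inl mF) (Sum.inr mF)), hu1, hu2⟩,
      W mF, Submonoid.subset_closure (W_mem mF hmFl), ?_⟩
    have hcoe : ((⟨-(g (Sum.inr mF) (Sum.inl mF)), -(g (Sum.inl mF) (Sum.inr mF)), hu1, hu2⟩
        : kˣ) : k) = -(g (Sum.inr mF) (Sum.inl mF)) := rfl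
    have hinv : (-(g (Sum.inr mF) (Sum.inl mF)))⁻¹ = -(g (Sum.inl mF) (Sum.inr mF)) :=
      inv_eq_of_mul_eq_one_right hu1
    ext r c
    rw [mul_diagonal, W_apply]
    rcases pair_cases r with hr | rfl | rfl
    · have n1 : ¬((Sum.inl mF : Idx l) = r ∧ Sum.inl mF = c) := by
        rintro ⟨rfl, -⟩; rw [idx_inl, hmFv] at hr; omega
      have n2 : ¬((Sum.inr mF : Idx l) = r ∧ Sum.inr mF = c) := by
        rintro ⟨rfl, -⟩; rw [idx_inr, hmFv] at hr; omega
      have n3 : ¬((Sum.inl mF : Idx l) = r ∧ Sum.inr mF = c) := by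
        rintro ⟨rfl, -⟩; rw [idx_inl, hmFv] at hr; omega
      have n4 : ¬((Sum.inr mF : Idx l) = r ∧ Sum.inl mF = c) := by
        rintro ⟨rfl, -⟩; rw [idx_inr, hmFv] at hr; omega
      rw [if_neg n1, if_neg n2, if_neg n3, if_neg n4, hF r c (Or.inl hr)]
      rcases eq_or_ne r c with rfl | hrc
      · rw [if_pos rfl, Dvec_small _ (by omega)]; ring
      · rw [if_neg hrc]; ring
    · rcases pair_cases c with hc | rfl | rfl
      · have hne : ¬((Sum.inl mF : Idx l) = c) := by
          rintro rfl; rw [idx_inl, hmFv] at hc; omega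
        have hne2 : ¬((Sum.inr mF : Idx l) = c) := by
          rintro rfl; rw [idx_inr, hmFv] at hc; omega
        rw [hF _ c (Or.inr hc), if_neg hne,
          if_neg (by rintro ⟨-, h⟩; exact hne h),
          if_neg (by rintro ⟨h, -⟩; simp at h),
          if_neg (by rintro ⟨-, h⟩; exact hne2 h),
          if_neg (by rintro ⟨h, -⟩; simp at h)]
        ring
      · rw [if_pos rfl, if_pos ⟨rfl, rfl⟩,
          if_neg (by rintro ⟨h, -⟩; simp at h),
          if_neg (by rintro ⟨-, h⟩; simp at h),
          if_neg (by rintro ⟨h, -⟩; simp at h), hA]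
        ring
      · rw [if_neg (by simp),
          if_neg (by rintro ⟨-, h⟩; simp at h),
          if_neg (by rintro ⟨h, -⟩; simp at h),
          if_pos ⟨rfl, rfl⟩,
          if_neg (by rintro ⟨h, -⟩; simp at h),
          Dvec_inr _ hmFl, hcoe, hinv]
        ring
    · rcases pair_cases c with hc | rfl | rfl
      · have hne : ¬((Sum.inl mF : Idx l) = c) := by
          rintro rfl; rw [idx_inl, hmFv] at hc; omega
        have hne2 : ¬((Sum.inr mF : Idx l) = c) := by
          rintro rfl; rw [idx_inr, hmFv] at hc; omega
        rw [hF _ c (Or.inr hc), if_neg hne2,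
          if_neg (by rintro ⟨h, -⟩; simp at h),
          if_neg (by rintro ⟨-, h⟩; exact hne2 h),
          if_neg (by rintro ⟨h, -⟩; simp at h),
          if_neg (by rintro ⟨-, h⟩; exact hne h)]
        ring
      · rw [if_neg (by simp),
          if_neg (by rintro ⟨h, -⟩; simp at h),
          if_neg (by rintro ⟨-, h⟩; simp at h),
          if_neg (by rintro ⟨h, -⟩; simp at h),
          if_pos ⟨rfl, rfl⟩,
          Dvec_inl _ hmFl, hcoe]
        ring
      · rw [if_pos rfl,
          if_neg (by rintro ⟨h, -⟩; simp at h),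
          if_pos ⟨rfl, rfl⟩,
          if_neg (by rintro ⟨h, -⟩; simp at h),
          if_neg (by rintro ⟨-, h⟩; simp at h), hD]
        ring
  · -- diagonal case : E = 1
    have hC : g (Sum.inr mF) (Sum.inl mF) = 0 := (mul_eq_zero.mp hAC).resolve_left hA
    have hAD : g (Sum.inl mF) (Sum.inl mF) * g (Sum.inr mF) (Sum.inr mF) = 1 := by
      rw [hC, zero_mul, add_zero] at e3
      exact e3
    have hDv : g (Sum.inr mF) (Sum.inr mF) ≠ 0 := right_ne_zero_of_mul_eq_one hAD
    have hB : g (Sum.inl mF) (Sum.inr mF) = 0 := (mul_eq_zero.mp hBD).resolve_right hDv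
    refine ⟨⟨g (Sum.inl mF) (Sum.inl mF), g (Sum.inr mF) (Sum.inr mF), hAD,
      by rw [mul_comm]; exact hAD⟩, 1, one_mem _, ?_⟩
    have hcoe : ((⟨g (Sum.inl mF) (Sum.inl mF), g (Sum.inr mF) (Sum.inr mF), hAD,
        by rw [mul_comm]; exact hAD⟩ : kˣ) : k) = g (Sum.inl mF) (Sum.inl mF) := rfl
    have hinv : (g (Sum.inl mF) (Sum.inl mF))⁻¹ = g (Sum.inr mF) (Sum.inr mF) :=
      inv_eq_of_mul_eq_one_right hAD
    rw [one_mul]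
    ext r c
    rw [diagonal_apply]
    rcases pair_cases r with hr | rfl | rfl
    · rcases eq_or_ne r c with rfl | hrc
      · rw [if_pos rfl, Dvec_small _ (by omega), hF r r (Or.inl hr), if_pos rfl]
      · rw [if_neg hrc, hF r c (Or.inl hr), if_neg hrc]
    · rcases pair_cases c with hc | rfl | rfl
      · have hne : ¬((Sum.inl mF : Idx l) = c) := by
          rintro rfl; rw [idx_inl, hmFv] at hc; omega
        rw [if_neg hne, hF _ c (Or.inr hc), if_neg hne]
      · rw [if_pos rfl, Dvec_inl _ hmFl, hcoe]
      · rw [if_neg (by simp)]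
        exact hB
    · rcases pair_cases c with hc | rfl | rfl
      · have hne2 : ¬((Sum.inr mF : Idx l) = c) := by
          rintro rfl; rw [idx_inr, hmFv] at hc; omega
        rw [if_neg hne2, hF _ c (Or.inr hc), if_neg hne2]
      · rw [if_neg (by simp)]
        exact hC
      · rw [if_pos rfl, Dvec_inr _ hmFl, hcoe, hinv]


/-! ### main induction -/

lemma main_aux (hchar : ringChar k ≠ 2) :
    ∀ d m : ℕ, m + d + 1 = l → ∀ g : Matrix (Idx l) (Idx l) k, Orth g → Fix m g →
    ∃ lam : kˣ, ∃ E ∈ Submonoid.closure (orthoElem k l),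
      g = E * diagonal (Dvec lam) := by
  intro d
  induction d with
  | zero =>
    intro m hm g hO hF
    exact base_case hchar m (by omega) g hO hF
  | succ d IH =>
    intro m hm g hO hF
    have two : (2 : k) ≠ 0 := Ring.two_ne_zero hchar
    set mF : Fin l := ⟨m, by omega⟩ with hmFdef
    set m1 : Fin l := ⟨m + 1, by omega⟩ with hm1def
    have hmFv : (mF : ℕ) = m := rfl
    have hm1v : (m1 : ℕ) = m + 1 := rfl
    -- stage 0 : make the (inl mF, inl mF) entry nonzero
    have hv0 : (fun r => g r (Sum.inl mF)) ≠ 0 := col_ne_zero hO _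
    have hsupp : ∀ x : Idx l, idx x < m → (fun r => g r (Sum.inl mF)) x = 0 := by
      intro x hx
      show g x (Sum.inl mF) = 0
      rw [hF x (Sum.inl mF) (Or.inl hx), if_neg]
      rintro rfl
      rw [idx_inl, hmFv] at hx
      omega
    obtain ⟨Ea, hEaMem, hEaFix, hEaNz⟩ := stage0 hmFv hm1v _ hv0 hsupp
    set g1 := Ea * g with hg1def
    have hO1 : Orth g1 := orth_mul (closure_orth hEaMem) hO
    have hF1 : Fix m g1 := Fix_mul hEaFix hF
    have hcol1 : ∀ r, g1 r (Sum.inl mF) = (Ea.mulVec (fun r => g r (Sum.inl mF))) r :=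
      fun r => congrFun (col_mul Ea g (Sum.inl mF)) r
    have hp1 : g1 (Sum.inl mF) (Sum.inl mF) ≠ 0 := by
      rw [hcol1 (Sum.inl mF)]
      exact hEaNz
    -- stage 1 : clear the (inl mF) column
    classical
    set S : Finset (Fin l) := Finset.univ.filter (fun j => m < (j : ℕ)) with hSdef
    have hSmem : ∀ j ∈ S, m < (j : ℕ) := by
      intro j hj
      simpa [hSdef] using hj
    have hSnot : ∀ j : Fin l, j ∉ S → (j : ℕ) ≤ m := by
      intro j hj
      by_contra h
      exact hj (by simp [hSdef]; omega)
    have hz1 : ∀ j : Fin l, (j : ℕ) ≠ m → j ∉ S →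
        (fun r => g1 r (Sum.inl mF)) (Sum.inl j) = 0 ∧
        (fun r => g1 r (Sum.inl mF)) (Sum.inr j) = 0 := by
      intro j hjm hjS
      have hjlt : (j : ℕ) < m := lt_of_le_of_ne (hSnot j hjS) hjm
      constructor
      · show g1 (Sum.inl j) (Sum.inl mF) = 0
        rw [hF1 (Sum.inl j) (Sum.inl mF) (Or.inl hjlt), if_neg (inl_ne_inl (by omega))]
      · show g1 (Sum.inr j) (Sum.inl mF) = 0
        rw [hF1 (Sum.inr j) (Sum.inl mF) (Or.inl hjlt), if_neg (inr_ne_inl j mF)]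
    obtain ⟨Eb, hEbMem, hEbFix, hEbP, hEbZ⟩ :=
      kill1 hmFv S hSmem (fun r => g1 r (Sum.inl mF)) hp1 hz1
    set g2 := Eb * g1 with hg2def
    have hO2 : Orth g2 := orth_mul (closure_orth hEbMem) hO1
    have hF2 : Fix m g2 := Fix_mul hEbFix hF1
    have hcol2 : ∀ r, g2 r (Sum.inl mF) = (Eb.mulVec (fun r => g1 r (Sum.inl mF))) r :=
      fun r => congrFun (col_mul Eb g1 (Sum.inl mF)) r
    have hp2 : g2 (Sum.inl mF) (Sum.inl mF) = g1 (Sum.inl mF) (Sum.inl mF) := by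
      rw [hcol2 (Sum.inl mF)]
      exact hEbP
    have hp2' : g2 (Sum.inl mF) (Sum.inl mF) ≠ 0 := by rw [hp2]; exact hp1
    have hz2 : ∀ x, x ≠ Sum.inl mF → x ≠ Sum.inr mF → g2 x (Sum.inl mF) = 0 := by
      intro x h1 h2
      rw [hcol2 x]
      exact hEbZ x h1 h2
    -- isotropy kills the (inr mF) entry
    have hq2 : g2 (Sum.inr mF) (Sum.inl mF) = 0 := by
      have h := orth_cols hO2 (Sum.inl mF) (Sum.inl mF)
      rw [Bf_pair mF _ _ hz2] at h
      simp only [sw_inl] at h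
      replace h := h.trans (if_neg (inr_ne_inl mF mF))
      have h' : 2 * (g2 (Sum.inl mF) (Sum.inl mF) * g2 (Sum.inr mF) (Sum.inl mF)) = 0 := by
        linear_combination h
      exact (mul_eq_zero.mp ((mul_eq_zero.mp h').resolve_left two)).resolve_left hp2'
    have hz2' : ∀ x, x ≠ Sum.inl mF → g2 x (Sum.inl mF) = 0 := by
      intro x h1
      rcases eq_or_ne x (Sum.inr mF) with rfl | h2
      · exact hq2
      · exact hz2 x h1 h2
    -- stage 1.5 : rescale
    obtain ⟨Ec, hEcMem, hEcFix, hEcStd⟩ := scale1 hmFv hm1v (fun r => g2 r (Sum.inl mF))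
      hp2' hz2'
    set g3 := Ec * g2 with hg3def
    have hO3 : Orth g3 := orth_mul (closure_orth hEcMem) hO2
    have hF3 : Fix m g3 := Fix_mul hEcFix hF2
    have hcol3 : ∀ r, g3 r (Sum.inl mF) = (Ec.mulVec (fun r => g2 r (Sum.inl mF))) r :=
      fun r => congrFun (col_mul Ec g2 (Sum.inl mF)) r
    have hcs3 : colStd g3 (Sum.inl mF) := by
      intro r
      rw [hcol3 r]
      exact hEcStd r
    -- row (inr mF) is standard
    have hrow3 : ∀ c, g3 (Sum.inr mF) c = if Sum.inr mF = c then 1 else 0 :=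
      fun c => row_std_of_colStd hO3 hcs3 c
    have hq3 : (fun r => g3 r (Sum.inr mF)) (Sum.inr mF) ≠ 0 := by
      show g3 (Sum.inr mF) (Sum.inr mF) ≠ 0
      rw [hrow3 (Sum.inr mF), if_pos rfl]
      exact one_ne_zero
    have hz3 : ∀ j : Fin l, (j : ℕ) ≠ m → j ∉ S →
        (fun r => g3 r (Sum.inr mF)) (Sum.inl j) = 0 ∧
        (fun r => g3 r (Sum.inr mF)) (Sum.inr j) = 0 := by
      intro j hjm hjS
      have hjlt : (j : ℕ) < m := lt_of_le_of_ne (hSnot j hjS) hjm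
      constructor
      · show g3 (Sum.inl j) (Sum.inr mF) = 0
        rw [hF3 (Sum.inl j) (Sum.inr mF) (Or.inl hjlt), if_neg (inl_ne_inr j mF)]
      · show g3 (Sum.inr j) (Sum.inr mF) = 0
        rw [hF3 (Sum.inr j) (Sum.inr mF) (Or.inl hjlt), if_neg (inr_ne_inr (by omega))]
    obtain ⟨Ed, hEdMem, hEdFix, hEdCol, hEdQ, hEdZ⟩ :=
      kill2 hmFv S hSmem (fun r => g3 r (Sum.inr mF)) hq3 hz3
    set g4 := Ed * g3 with hg4def
    have hO4 : Orth g4 := orth_mul (closure_orth hEdMem) hO3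
    have hF4 : Fix m g4 := Fix_mul hEdFix hF3
    have hcs4l : colStd g4 (Sum.inl mF) := colStd_mul hEdCol hcs3
    have hcol4 : ∀ r, g4 r (Sum.inr mF) = (Ed.mulVec (fun r => g3 r (Sum.inr mF))) r :=
      fun r => congrFun (col_mul Ed g3 (Sum.inr mF)) r
    have hq4 : g4 (Sum.inr mF) (Sum.inr mF) = 1 := by
      rw [hcol4 (Sum.inr mF), hEdQ]
      show g3 (Sum.inr mF) (Sum.inr mF) = 1
      rw [hrow3 (Sum.inr mF), if_pos rfl]
    have hz4 : ∀ x, x ≠ Sum.inl mF → x ≠ Sum.inr mF → g4 x (Sum.inr mF) = 0 := by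
      intro x h1 h2
      rw [hcol4 x]
      exact hEdZ x h1 h2
    have ha4 : g4 (Sum.inl mF) (Sum.inr mF) = 0 := by
      have h := orth_cols hO4 (Sum.inr mF) (Sum.inr mF)
      rw [Bf_pair mF _ _ (fun x hx1 hx2 => hz4 x hx1 hx2)] at h
      simp only [sw_inr] at h
      replace h := h.trans (if_neg (inl_ne_inr mF mF))
      have h' : 2 * (g4 (Sum.inl mF) (Sum.inr mF) * g4 (Sum.inr mF) (Sum.inr mF)) = 0 := by
        linear_combination h
      have h'' := (mul_eq_zero.mp h').resolve_left two
      rcases mul_eq_zero.mp h'' with h3 | h3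
      · exact h3
      · rw [hq4] at h3
        exact absurd h3 one_ne_zero
    have hcs4r : colStd g4 (Sum.inr mF) := by
      intro r
      rcases eq_or_ne r (Sum.inr mF) with rfl | h1
      · rw [if_pos rfl, hq4]
      · rw [if_neg h1]
        rcases eq_or_ne r (Sum.inl mF) with rfl | h2
        · exact ha4
        · exact hz4 r h2 h1
    -- Fix (m + 1)
    have hF4' : Fix (m + 1) g4 := by
      apply fix_of_cols hO4
      intro x hx
      rcases Nat.lt_succ_iff_lt_or_eq.mp hx with h | h
      · exact Fix_col hF4 h
      · cases x with
        | inl i =>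
          rw [show i = mF from Fin.val_injective (by rw [hmFv]; exact h)]
          exact hcs4l
        | inr i =>
          rw [show i = mF from Fin.val_injective (by rw [hmFv]; exact h)]
          exact hcs4r
    obtain ⟨lam, E2, hE2mem, hE2eq⟩ := IH (m + 1) (by omega) g4 hO4 hF4'
    -- unwind
    have hchain : Ed * (Ec * (Eb * Ea)) * g = g4 := by
      rw [hg4def, hg3def, hg2def, hg1def]
      simp only [Matrix.mul_assoc]
    have hPmem : Ed * (Ec * (Eb * Ea)) ∈ Submonoid.closure (orthoElem k l) :=
      mul_mem hEdMem (mul_mem hEcMem (mul_mem hEbMem hEaMem))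
    obtain ⟨F, hFmem, hFP, -⟩ := closure_inv hPmem
    refine ⟨lam, F * E2, mul_mem hFmem hE2mem, ?_⟩
    calc g = 1 * g := by rw [one_mul]
      _ = F * (Ed * (Ec * (Eb * Ea))) * g := by rw [hFP]
      _ = F * (Ed * (Ec * (Eb * Ea)) * g) := by rw [Matrix.mul_assoc]
      _ = F * (E2 * diagonal (Dvec lam)) := by rw [hchain, hE2eq]
      _ = F * E2 * diagonal (Dvec lam) := by rw [Matrix.mul_assoc]

end OGE

/-- Gaussian elimination in the split orthogonal group `O(2l, k)`:
every `g` with `ᵀg·β·g = β` is a product of elementary split orthogonal matrices and a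
diagonal matrix `diag(1, …, 1, λ, 1, …, 1, λ⁻¹)`. -/
theorem O_even_gaussian_elimination (k : Type*) [Field k] (hchar : ringChar k ≠ 2)
    (l : ℕ) (hl : 2 ≤ l)
    (g : Matrix (Fin l ⊕ Fin l) (Fin l ⊕ Fin l) k) (hg : IsUnit g.det)
    (hsim : gᵀ * (Matrix.fromBlocks 0 1 1 0 :
        Matrix (Fin l ⊕ Fin l) (Fin l ⊕ Fin l) k) * g
      = (Matrix.fromBlocks 0 1 1 0 :
        Matrix (Fin l ⊕ Fin l) (Fin l ⊕ Fin l) k)) :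
    ∃ lam : kˣ, ∃ E ∈ Submonoid.closure (orthoElem k l),
      g = E * Matrix.diagonal (Sum.elim
            (fun i : Fin l => if (i : ℕ) + 1 = l then (lam : k) else 1)
            (fun i : Fin l => if (i : ℕ) + 1 = l then (lam : k)⁻¹ else 1)) := by
  have hO : OGE.Orth g := hsim
  have hF : OGE.Fix 0 g := by
    intro r c h
    rcases h with h | h <;> omega
  obtain ⟨lam, E, hE, heq⟩ := OGE.main_aux hchar (l - 1) 0 (by omega) g hO hF
  exact ⟨lam, E, hE, heq⟩
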